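/- Under the stated assumptions, for all ℓ, h ∈ (0,1]: (i) for every x ∈ I₀, almost surely |b̂*_{ℓ,h}(x) − b̂_{ℓ,h}(x)| · 1_{Ω_{b̂}} ≤ 2 |b̂(l_ε) − b(l_ε)| + |b̂(r_ε) − b(r_ε)|; and consequently (ii) E( 1_{Ω_{b̂}} ∫_{I₀} |b̂*_{ℓ,h}(x) − b̂_{ℓ,h}(x)| dx ) ≤ 3 (r₀ − l₀) 𝔯(b̂)^{1/2}. -/

import Mathlib

open MeasureTheory

/-- The rescaled kernel `K_η(x) = η⁻¹ K(x/η)`. -/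
noncomputable def Kh (K : ℝ → ℝ) (η x : ℝ) : ℝ := η⁻¹ * K (x / η)

/-- The estimator `𝔟̂_h⁻¹(w) = l₀ - 2ε + ∫_{I_{2ε}} ∫_{-∞}^{-w} K_h(-g(z) - y) dy dz`
of the inverse of `b`, computed from an estimation `g` of `b`. -/
noncomputable def binvEst (K : ℝ → ℝ) (l₀ r₀ ε h : ℝ) (g : ℝ → ℝ) (w : ℝ) : ℝ :=
  (l₀ - 2 * ε) +
    ∫ z in Set.Icc (l₀ - 2 * ε) (r₀ + 2 * ε), ∫ y in Set.Iic (-w), Kh K h (-(g z) - y)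

/-- The strictly decreasing estimator
`lo + ∫_{lo}^{hi} ∫_{-∞}^{-x} K_ℓ(-𝔟̂_h⁻¹(z) - y) dy dz`. -/
noncomputable def monoEst (K : ℝ → ℝ) (l₀ r₀ ε ℓ h lo hi : ℝ) (g : ℝ → ℝ) (x : ℝ) : ℝ :=
  lo + ∫ z in lo..hi, ∫ y in Set.Iic (-x), Kh K ℓ (-(binvEst K l₀ r₀ ε h g z) - y)

section aux
variable {K : ℝ → ℝ} {η : ℝ}

lemma kh_nonneg (hK0 : ∀ y, 0 ≤ K y) (hη : 0 < η) (x : ℝ) : 0 ≤ Kh K η x :=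
  mul_nonneg (inv_nonneg.2 hη.le) (hK0 _)

lemma kh_cont (hKc : Continuous K) : Continuous (Kh K η) :=
  continuous_const.mul (hKc.comp (continuous_id.div_const η))

lemma kh_hcs (hKsupp : ∀ y, 1 < |y| → K y = 0) (hη : 0 < η) :
    HasCompactSupport (Kh K η) := by
  apply HasCompactSupport.intro (isCompact_Icc (a := -η) (b := η))
  intro x hx
  have h1 : 1 < |x / η| := by
    rw [abs_div, abs_of_pos hη, lt_div_iff₀ hη, one_mul]
    simp only [Set.mem_Icc, not_and_or, not_le] at hx
    rcases hx with h | h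
    · rw [abs_of_neg (by linarith)]; linarith
    · rw [abs_of_pos (by linarith)]; linarith
  simp [Kh, hKsupp _ h1]

lemma kh_integrable (hKc : Continuous K) (hKsupp : ∀ y, 1 < |y| → K y = 0) (hη : 0 < η) :
    Integrable (Kh K η) := (kh_cont hKc).integrable_of_hasCompactSupport (kh_hcs hKsupp hη)

lemma kh_integral (hKint : ∫ y, K y = 1) (hη : 0 < η) : ∫ x, Kh K η x = 1 := by
  have : ∫ x, Kh K η x = η⁻¹ * ∫ x, K (x / η) := by
    simp only [Kh]; exact integral_const_mul _ _
  rw [this, Measure.integral_comp_div K η, hKint, abs_of_pos hη, smul_eq_mul, mul_one,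
    inv_mul_cancel₀ hη.ne']

lemma G_shift_integrable (hKc : Continuous K) (hKsupp : ∀ y, 1 < |y| → K y = 0)
    (hη : 0 < η) (c : ℝ) : Integrable (fun y => Kh K η (c - y)) :=
  (kh_integrable hKc hKsupp hη).comp_sub_left c

lemma G_nonneg (hK0 : ∀ y, 0 ≤ K y) (hη : 0 < η) (t c : ℝ) :
    0 ≤ ∫ y in Set.Iic t, Kh K η (c - y) :=
  setIntegral_nonneg measurableSet_Iic fun y _ => kh_nonneg hK0 hη _

lemma G_le_one (hK0 : ∀ y, 0 ≤ K y) (hKc : Continuous K)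
    (hKsupp : ∀ y, 1 < |y| → K y = 0) (hKint : ∫ y, K y = 1) (hη : 0 < η) (t c : ℝ) :
    ∫ y in Set.Iic t, Kh K η (c - y) ≤ 1 := by
  calc ∫ y in Set.Iic t, Kh K η (c - y)
      ≤ ∫ y, Kh K η (c - y) :=
        setIntegral_le_integral (G_shift_integrable hKc hKsupp hη c)
          (Filter.Eventually.of_forall fun y => kh_nonneg hK0 hη _)
    _ = ∫ y, Kh K η y := integral_sub_left_eq_self (Kh K η) volume c
    _ = 1 := kh_integral hKint hη

lemma G_cont (hKc : Continuous K) (hKsupp : ∀ y, 1 < |y| → K y = 0) (hη : 0 < η) (t : ℝ) :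
    Continuous (fun c => ∫ y in Set.Iic t, Kh K η (c - y)) := by
  have hconv :
      (fun c => ∫ y in Set.Iic t, Kh K η (c - y)) =
        MeasureTheory.convolution (Set.indicator (Set.Iic t) (fun _ => (1 : ℝ))) (Kh K η)
          (ContinuousLinearMap.lsmul ℝ ℝ) volume := by
    funext c
    rw [MeasureTheory.convolution_def, ← integral_indicator measurableSet_Iic]
    congr 1
    funext y
    by_cases hy : y ∈ Set.Iic t <;> simp [hy, ContinuousLinearMap.lsmul_apply]
  rw [hconv]
  exact (kh_hcs hKsupp hη).continuous_convolution_right _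
    ((locallyIntegrable_const (1 : ℝ)).indicator measurableSet_Iic) (kh_cont hKc)

variable {l₀ r₀ ε h ℓ : ℝ}

lemma inner_intOn (hK0 : ∀ y, 0 ≤ K y) (hKc : Continuous K)
    (hKsupp : ∀ y, 1 < |y| → K y = 0) (hKint : ∫ y, K y = 1) (hη : 0 < η)
    {g : ℝ → ℝ} (hg : Measurable g) (w a b : ℝ) :
    IntegrableOn (fun z => ∫ y in Set.Iic (-w), Kh K η (-(g z) - y)) (Set.Icc a b) := by
  have hmeas : Measurable fun z => ∫ y in Set.Iic (-w), Kh K η (-(g z) - y) :=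
    (G_cont hKc hKsupp hη (-w)).measurable.comp hg.neg
  refine Integrable.mono' (g := fun _ => (1 : ℝ))
    (integrableOn_const measure_Icc_lt_top.ne)
    hmeas.aestronglyMeasurable (Filter.Eventually.of_forall fun z => ?_)
  rw [Real.norm_eq_abs, abs_of_nonneg (G_nonneg hK0 hη _ _)]
  exact G_le_one hK0 hKc hKsupp hKint hη _ _

lemma binv_meas (hK0 : ∀ y, 0 ≤ K y) (hKc : Continuous K)
    (hKsupp : ∀ y, 1 < |y| → K y = 0) (hKint : ∫ y, K y = 1) (hh0 : 0 < h)
    {g : ℝ → ℝ} (hg : Measurable g) :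
    Measurable (binvEst K l₀ r₀ ε h g) := by
  have hant : Antitone (binvEst K l₀ r₀ ε h g) := by
    intro w₁ w₂ hw
    unfold binvEst
    apply add_le_add le_rfl
    apply setIntegral_mono_on (inner_intOn hK0 hKc hKsupp hKint hh0 hg w₂ _ _)
      (inner_intOn hK0 hKc hKsupp hKint hh0 hg w₁ _ _) measurableSet_Icc
    intro z _
    apply setIntegral_mono_set ((G_shift_integrable hKc hKsupp hh0 (-(g z))).integrableOn)
      (Filter.Eventually.of_forall fun y => kh_nonneg hK0 hh0 _)
      (HasSubset.Subset.eventuallyLE (Set.Iic_subset_Iic.2 (neg_le_neg hw)))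
  exact hant.measurable

/-- The key deterministic estimate. -/
lemma monoEst_diff_le (hK0 : ∀ y, 0 ≤ K y) (hKc : Continuous K)
    (hKsupp : ∀ y, 1 < |y| → K y = 0) (hKint : ∫ y, K y = 1)
    (hℓ0 : 0 < ℓ) (hh0 : 0 < h)
    {g : ℝ → ℝ} (hg : Measurable g) (lo hi lo' hi' x : ℝ) :
    |monoEst K l₀ r₀ ε ℓ h lo' hi' g x - monoEst K l₀ r₀ ε ℓ h lo hi g x| ≤
      |lo' - lo| + |hi' - hi| := by
  set F := fun z => ∫ y in Set.Iic (-x), Kh K ℓ (-(binvEst K l₀ r₀ ε h g z) - y) with hF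
  have hFm : Measurable F :=
    (G_cont hKc hKsupp hℓ0 (-x)).measurable.comp (binv_meas hK0 hKc hKsupp hKint hh0 hg).neg
  have hF0 : ∀ z, 0 ≤ F z := fun z => G_nonneg hK0 hℓ0 _ _
  have hF1 : ∀ z, F z ≤ 1 := fun z => G_le_one hK0 hKc hKsupp hKint hℓ0 _ _
  have hFi : ∀ a b : ℝ, IntervalIntegrable F volume a b := by
    intro a b
    refine (intervalIntegrable_const (c := (1 : ℝ))).mono_fun hFm.aestronglyMeasurable
      (Filter.Eventually.of_forall fun z => ?_)
    simp only [Real.norm_eq_abs, abs_one]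
    rw [abs_of_nonneg (hF0 z)]
    exact hF1 z
  have split : (∫ z in lo'..hi', F z) =
      (∫ z in lo'..lo, F z) + (∫ z in lo..hi, F z) + (∫ z in hi..hi', F z) := by
    rw [← intervalIntegral.integral_add_adjacent_intervals (hFi lo' hi) (hFi hi hi'),
      ← intervalIntegral.integral_add_adjacent_intervals (hFi lo' lo) (hFi lo hi)]
  have hdiff : monoEst K l₀ r₀ ε ℓ h lo' hi' g x - monoEst K l₀ r₀ ε ℓ h lo hi g x =
      (∫ z in lo..lo', (1 - F z)) + ∫ z in hi..hi', F z := by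
    have h1 : (∫ z in lo..lo', (1 - F z)) =
        (lo' - lo) - ∫ z in lo..lo', F z := by
      rw [intervalIntegral.integral_sub intervalIntegrable_const (hFi lo lo')]
      simp
    rw [h1]
    simp only [monoEst, ← hF]
    rw [split, intervalIntegral.integral_symm lo lo']
    ring
  rw [hdiff]
  have b1 : |∫ z in lo..lo', (1 - F z)| ≤ |lo' - lo| := by
    have := intervalIntegral.norm_integral_le_of_norm_le_const (C := 1)
      (f := fun z => 1 - F z) (a := lo) (b := lo') ?_
    · rw [Real.norm_eq_abs] at this; linarith [this]
    · intro z _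
      rw [Real.norm_eq_abs, abs_le]
      refine ⟨?_, ?_⟩
      · show (-1 : ℝ) ≤ 1 - F z
        linarith [hF1 z]
      · show 1 - F z ≤ (1 : ℝ)
        linarith [hF0 z]
  have b2 : |∫ z in hi..hi', F z| ≤ |hi' - hi| := by
    have := intervalIntegral.norm_integral_le_of_norm_le_const (C := 1)
      (f := F) (a := hi) (b := hi') ?_
    · rw [Real.norm_eq_abs] at this; linarith [this]
    · intro z _
      rw [Real.norm_eq_abs, abs_le]
      exact ⟨by linarith [hF0 z], hF1 z⟩
  calc |(∫ z in lo..lo', (1 - F z)) + ∫ z in hi..hi', F z|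
      ≤ |∫ z in lo..lo', (1 - F z)| + |∫ z in hi..hi', F z| := abs_add_le _ _
    _ ≤ |lo' - lo| + |hi' - hi| := add_le_add b1 b2

/-- `E|f| ≤ √r` when `E|f|² ≤ r`. -/
lemma exp_abs_le {Ω : Type} [MeasurableSpace Ω] (P : Measure Ω) [IsProbabilityMeasure P]
    (f : Ω → ℝ) (hsq : Integrable (fun ω => |f ω| ^ 2) P) (r : ℝ)
    (hr : (∫ ω, |f ω| ^ 2 ∂P) ≤ r) : (∫ ω, |f ω| ∂P) ≤ Real.sqrt r := by
  have hr0 : 0 ≤ r :=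
    le_trans (integral_nonneg fun ω => pow_nonneg (abs_nonneg _) 2) hr
  rcases eq_or_lt_of_le hr0 with h0 | h0
  · have hz : (∫ ω, |f ω| ^ 2 ∂P) = 0 :=
      le_antisymm (h0 ▸ hr) (integral_nonneg fun ω => pow_nonneg (abs_nonneg _) 2)
    have hz2 : ∀ᵐ ω ∂P, |f ω| ^ 2 = 0 :=
      (integral_eq_zero_iff_of_nonneg (fun ω => pow_nonneg (abs_nonneg _) 2) hsq).mp hz
    have : (∫ ω, |f ω| ∂P) = 0 := by
      rw [integral_eq_zero_iff_of_nonneg (fun ω => abs_nonneg _)]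
      · filter_upwards [hz2] with ω hω
        simpa [pow_eq_zero_iff] using hω
      · have hfm : AEStronglyMeasurable (fun ω => |f ω|) P :=
          (Real.continuous_sqrt.comp_aestronglyMeasurable hsq.aestronglyMeasurable).congr
            (Filter.Eventually.of_forall fun ω => by
              simp [Real.sqrt_sq_eq_abs])
        refine Integrable.mono' (g := fun ω => 1 + |f ω| ^ 2)
          ((integrable_const (1 : ℝ)).add hsq) hfm
          (Filter.Eventually.of_forall fun ω => ?_)
        rw [Real.norm_eq_abs, abs_abs]
        show |f ω| ≤ 1 + |f ω| ^ 2
        nlinarith [abs_nonneg (f ω), sq_nonneg (|f ω| - 1)]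
    rw [this, ← h0, Real.sqrt_zero]
  · set t := Real.sqrt r with ht
    have ht0 : 0 < t := Real.sqrt_pos.mpr h0
    have htr : t ^ 2 = r := Real.sq_sqrt hr0
    have key : (∫ ω, |f ω| ∂P) ≤ ∫ ω, (t / 2 + |f ω| ^ 2 / (2 * t)) ∂P := by
      refine integral_mono_of_nonneg (Filter.Eventually.of_forall fun ω => abs_nonneg _)
        ((integrable_const (t / 2)).add (hsq.div_const (2 * t)))
        (Filter.Eventually.of_forall fun ω => ?_)
      have h2t : 0 < 2 * t := by linarith
      have h1 : t / 2 + |f ω| ^ 2 / (2 * t) - |f ω| = (|f ω| - t) ^ 2 / (2 * t) := by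
        field_simp
        rw [sub_sq, sq_abs]
        ring
      have h2 : 0 ≤ (|f ω| - t) ^ 2 / (2 * t) := div_nonneg (sq_nonneg _) h2t.le
      simp only []
      linarith
    have heq : (∫ ω, (t / 2 + |f ω| ^ 2 / (2 * t)) ∂P) =
        t / 2 + (∫ ω, |f ω| ^ 2 ∂P) / (2 * t) := by
      rw [integral_add (integrable_const _) (hsq.div_const (2 * t)), integral_const,
        integral_div]
      simp
    rw [heq] at key
    have : (∫ ω, |f ω| ^ 2 ∂P) / (2 * t) ≤ r / (2 * t) := by
      gcongr
    calc (∫ ω, |f ω| ∂P) ≤ t / 2 + (∫ ω, |f ω| ^ 2 ∂P) / (2 * t) := key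
      _ ≤ t / 2 + r / (2 * t) := by linarith
      _ = t := by rw [← htr]; field_simp; ring
end aux

lemma abs_int {Ω : Type} [MeasurableSpace Ω] (P : Measure Ω) [IsProbabilityMeasure P]
    (f : Ω → ℝ) (hsq : Integrable (fun ω => |f ω| ^ 2) P) :
    Integrable (fun ω => |f ω|) P := by
  have hfm : AEStronglyMeasurable (fun ω => |f ω|) P :=
    (Real.continuous_sqrt.comp_aestronglyMeasurable hsq.aestronglyMeasurable).congr
      (Filter.Eventually.of_forall fun ω => by simp [Real.sqrt_sq_eq_abs])
  refine Integrable.mono' (g := fun ω => 1 + |f ω| ^ 2)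
    ((integrable_const (1 : ℝ)).add hsq) hfm (Filter.Eventually.of_forall fun ω => ?_)
  rw [Real.norm_eq_abs, abs_abs]
  show |f ω| ≤ 1 + |f ω| ^ 2
  nlinarith [abs_nonneg (f ω), sq_nonneg (|f ω| - 1)]

/-- Bounds on `b̂*_{ℓ,h} - b̂_{ℓ,h}` on the event `Ω_{b̂}`. -/
theorem stmt9 (l₀ r₀ ε mb : ℝ) (K b b' : ℝ → ℝ)
    (hlr : l₀ < r₀) (hε : 0 < ε) (hε1 : ε ≤ 1) (hmb : 0 < mb)
    -- kernel assumptions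
    (hK0 : ∀ y, 0 ≤ K y) (hK2 : ContDiff ℝ 2 K) (hKsymm : ∀ y, K (-y) = K y)
    (hKsupp : ∀ y, 1 < |y| → K y = 0) (hKint : ∫ y, K y = 1)
    -- `b` is continuously differentiable on `I_{2ε}` with `b' ≤ -mb` there
    (hbd : ∀ x ∈ Set.Icc (l₀ - 2 * ε) (r₀ + 2 * ε), HasDerivAt b (b' x) x)
    (hb'c : ContinuousOn b' (Set.Icc (l₀ - 2 * ε) (r₀ + 2 * ε)))
    (hb'le : ∀ x ∈ Set.Icc (l₀ - 2 * ε) (r₀ + 2 * ε), b' x ≤ -mb)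
    -- the probability space and the estimator `b̂`
    (Ω : Type) [MeasurableSpace Ω] (P : Measure Ω) [IsProbabilityMeasure P]
    (bhat : Ω → ℝ → ℝ) (hbhat : Measurable (Function.uncurry bhat))
    -- `𝔯` is an upper bound of the pointwise `L²`-risk on `I_{2ε}` (assumed finite)
    (𝔯 : ℝ) (h𝔯 : ∀ x ∈ Set.Icc (l₀ - 2 * ε) (r₀ + 2 * ε),
      (∫ ω, |bhat ω x - b x| ^ 2 ∂P) ≤ 𝔯)
    (hsq : ∀ x ∈ Set.Icc (l₀ - 2 * ε) (r₀ + 2 * ε),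
      Integrable (fun ω => |bhat ω x - b x| ^ 2) P)
    -- the bandwidths
    (ℓ h : ℝ) (hℓ0 : 0 < ℓ) (hℓ1 : ℓ ≤ 1) (hh0 : 0 < h) (hh1 : h ≤ 1) :
    -- (i) pointwise (almost sure) bound
    (∀ x ∈ Set.Icc l₀ r₀, ∀ᵐ ω ∂P,
      Set.indicator
          {ω' : Ω | bhat ω' (r₀ + ε) - bhat ω' (l₀ - ε) ≤
            -(mb / 2) * ((r₀ + ε) - (l₀ - ε))}
          (fun ω' =>
            |monoEst K l₀ r₀ ε ℓ h (bhat ω' (r₀ + ε)) (bhat ω' (l₀ - ε)) (bhat ω') x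
              - monoEst K l₀ r₀ ε ℓ h (b (r₀ + ε)) (b (l₀ - ε)) (bhat ω') x|) ω ≤
        2 * |bhat ω (l₀ - ε) - b (l₀ - ε)| + |bhat ω (r₀ + ε) - b (r₀ + ε)|) ∧
    -- (ii) integrated bound
    (∫ ω, Set.indicator
        {ω' : Ω | bhat ω' (r₀ + ε) - bhat ω' (l₀ - ε) ≤
          -(mb / 2) * ((r₀ + ε) - (l₀ - ε))}
        (fun ω' => ∫ x in Set.Icc l₀ r₀,
          |monoEst K l₀ r₀ ε ℓ h (bhat ω' (r₀ + ε)) (bhat ω' (l₀ - ε)) (bhat ω') x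
            - monoEst K l₀ r₀ ε ℓ h (b (r₀ + ε)) (b (l₀ - ε)) (bhat ω') x|) ω ∂P) ≤
      3 * (r₀ - l₀) * Real.sqrt 𝔯 := by
  have hKc : Continuous K := hK2.continuous
  have hle : l₀ - ε ∈ Set.Icc (l₀ - 2 * ε) (r₀ + 2 * ε) :=
    ⟨by linarith, by linarith⟩
  have hre : r₀ + ε ∈ Set.Icc (l₀ - 2 * ε) (r₀ + 2 * ε) :=
    ⟨by linarith, by linarith⟩
  have hsec : ∀ ω, Measurable (bhat ω) := fun ω => hbhat.comp measurable_prodMk_left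
  have key : ∀ (ω : Ω) (x : ℝ),
      |monoEst K l₀ r₀ ε ℓ h (bhat ω (r₀ + ε)) (bhat ω (l₀ - ε)) (bhat ω) x
        - monoEst K l₀ r₀ ε ℓ h (b (r₀ + ε)) (b (l₀ - ε)) (bhat ω) x| ≤
      |bhat ω (r₀ + ε) - b (r₀ + ε)| + |bhat ω (l₀ - ε) - b (l₀ - ε)| := fun ω x =>
    monoEst_diff_le hK0 hKc hKsupp hKint hℓ0 hh0 (hsec ω) _ _ _ _ x
  constructor
  · intro x _
    refine Filter.Eventually.of_forall fun ω => ?_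
    by_cases hω : ω ∈ {ω' : Ω | bhat ω' (r₀ + ε) - bhat ω' (l₀ - ε) ≤
        -(mb / 2) * ((r₀ + ε) - (l₀ - ε))}
    · rw [Set.indicator_of_mem hω]
      refine le_trans (key ω x) ?_
      have := abs_nonneg (bhat ω (l₀ - ε) - b (l₀ - ε))
      linarith
    · rw [Set.indicator_of_notMem hω]
      positivity
  · have hintl : Integrable (fun ω => |bhat ω (l₀ - ε) - b (l₀ - ε)|) P :=
      abs_int P _ (hsq _ hle)
    have hintr : Integrable (fun ω => |bhat ω (r₀ + ε) - b (r₀ + ε)|) P :=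
      abs_int P _ (hsq _ hre)
    have hEl : (∫ ω, |bhat ω (l₀ - ε) - b (l₀ - ε)| ∂P) ≤ Real.sqrt 𝔯 :=
      exp_abs_le P _ (hsq _ hle) 𝔯 (h𝔯 _ hle)
    have hEr : (∫ ω, |bhat ω (r₀ + ε) - b (r₀ + ε)| ∂P) ≤ Real.sqrt 𝔯 :=
      exp_abs_le P _ (hsq _ hre) 𝔯 (h𝔯 _ hre)
    have hptwise : ∀ ω : Ω,
        Set.indicator
          {ω' : Ω | bhat ω' (r₀ + ε) - bhat ω' (l₀ - ε) ≤
            -(mb / 2) * ((r₀ + ε) - (l₀ - ε))}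
          (fun ω' => ∫ x in Set.Icc l₀ r₀,
            |monoEst K l₀ r₀ ε ℓ h (bhat ω' (r₀ + ε)) (bhat ω' (l₀ - ε)) (bhat ω') x
              - monoEst K l₀ r₀ ε ℓ h (b (r₀ + ε)) (b (l₀ - ε)) (bhat ω') x|) ω ≤
        (r₀ - l₀) * (|bhat ω (r₀ + ε) - b (r₀ + ε)| + |bhat ω (l₀ - ε) - b (l₀ - ε)|) := by
      intro ω
      have hg0 : 0 ≤ (r₀ - l₀) *
          (|bhat ω (r₀ + ε) - b (r₀ + ε)| + |bhat ω (l₀ - ε) - b (l₀ - ε)|) :=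
        mul_nonneg (by linarith) (by positivity)
      by_cases hω : ω ∈ {ω' : Ω | bhat ω' (r₀ + ε) - bhat ω' (l₀ - ε) ≤
          -(mb / 2) * ((r₀ + ε) - (l₀ - ε))}
      · rw [Set.indicator_of_mem hω]
        have hbound : (∫ x in Set.Icc l₀ r₀,
            |monoEst K l₀ r₀ ε ℓ h (bhat ω (r₀ + ε)) (bhat ω (l₀ - ε)) (bhat ω) x
              - monoEst K l₀ r₀ ε ℓ h (b (r₀ + ε)) (b (l₀ - ε)) (bhat ω) x|) ≤
            ∫ _x in Set.Icc l₀ r₀,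
              (|bhat ω (r₀ + ε) - b (r₀ + ε)| + |bhat ω (l₀ - ε) - b (l₀ - ε)|) :=
          integral_mono_of_nonneg (Filter.Eventually.of_forall fun x => abs_nonneg _)
            (integrableOn_const measure_Icc_lt_top.ne)
            (Filter.Eventually.of_forall fun x => key ω x)
        refine le_trans hbound (le_of_eq ?_)
        rw [setIntegral_const, Real.volume_real_Icc_of_le hlr.le,
          smul_eq_mul]
      · rw [Set.indicator_of_notMem hω]
        exact hg0
    have hind0 : ∀ ω : Ω, (0 : ℝ) ≤
        Set.indicator
          {ω' : Ω | bhat ω' (r₀ + ε) - bhat ω' (l₀ - ε) ≤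
            -(mb / 2) * ((r₀ + ε) - (l₀ - ε))}
          (fun ω' => ∫ x in Set.Icc l₀ r₀,
            |monoEst K l₀ r₀ ε ℓ h (bhat ω' (r₀ + ε)) (bhat ω' (l₀ - ε)) (bhat ω') x
              - monoEst K l₀ r₀ ε ℓ h (b (r₀ + ε)) (b (l₀ - ε)) (bhat ω') x|) ω :=
      fun ω => Set.indicator_nonneg (fun ω' _ => integral_nonneg fun x => abs_nonneg _) ω
    have hmain := integral_mono_of_nonneg (μ := P)
      (Filter.Eventually.of_forall hind0)
      ((hintr.add hintl).const_mul (r₀ - l₀))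
      (Filter.Eventually.of_forall hptwise)
    refine le_trans hmain ?_
    have hsum : (∫ ω, (|bhat ω (r₀ + ε) - b (r₀ + ε)| + |bhat ω (l₀ - ε) - b (l₀ - ε)|) ∂P)
        = (∫ ω, |bhat ω (r₀ + ε) - b (r₀ + ε)| ∂P)
          + ∫ ω, |bhat ω (l₀ - ε) - b (l₀ - ε)| ∂P :=
      integral_add hintr hintl
    rw [integral_const_mul]
    simp only [Pi.add_apply]
    rw [hsum]
    nlinarith [Real.sqrt_nonneg 𝔯,
      mul_le_mul_of_nonneg_left (add_le_add hEr hEl) (by linarith : (0:ℝ) ≤ r₀ - l₀),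
      mul_nonneg (by linarith : (0:ℝ) ≤ r₀ - l₀) (Real.sqrt_nonneg 𝔯)]
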